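/- arXiv:1407.4029 — 4 statements merged into one kernel-verified Lean document; each statement's English description precedes it below -/
import Mathlib

section
/- Let A, B, C, D > 0 and p > 2. Then the system t⁻ = A(t⁺)^{p-1} − B t⁺, t⁺ = C(t⁻)^{p-2} t⁻ − D t⁻ has at most one solution (t⁺, t⁻) with t⁺ > 0 and t⁻ > 0. -/
/-- If `s = E t^(p-1) - F t` for two positive pairs and `t₁ < t₂`, then
`s₁/t₁ < s₂/t₂`, i.e. `s₁ t₂ < s₂ t₁`. -/
lemma stmt_0_aux {E F p : ℝ} (hE : 0 < E) (hp : 2 < p) {t₁ s₁ t₂ s₂ : ℝ}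
    (ht₁ : 0 < t₁) (ht₂ : 0 < t₂)
    (h₁ : s₁ = E * t₁ ^ (p - 1) - F * t₁) (h₂ : s₂ = E * t₂ ^ (p - 1) - F * t₂)
    (hlt : t₁ < t₂) : s₁ * t₂ < s₂ * t₁ := by
  have e₁ : t₁ ^ (p - 1) = t₁ ^ (p - 2) * t₁ := by
    rw [show p - 1 = (p - 2) + 1 by ring, Real.rpow_add_one ht₁.ne']
  have e₂ : t₂ ^ (p - 1) = t₂ ^ (p - 2) * t₂ := by
    rw [show p - 1 = (p - 2) + 1 by ring, Real.rpow_add_one ht₂.ne']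
  have key : t₁ ^ (p - 2) < t₂ ^ (p - 2) :=
    Real.rpow_lt_rpow ht₁.le hlt (by linarith)
  rw [h₁, h₂, e₁, e₂]
  nlinarith [mul_pos (mul_pos hE (mul_pos ht₁ ht₂)) (sub_pos.2 key)]

theorem stmt_0 (A B C D p : ℝ) (hA : 0 < A) (hB : 0 < B) (hC : 0 < C) (hD : 0 < D)
    (hp : 2 < p) (t₁ s₁ t₂ s₂ : ℝ) (ht₁ : 0 < t₁) (hs₁ : 0 < s₁) (ht₂ : 0 < t₂) (hs₂ : 0 < s₂)
    (h₁ : s₁ = A * t₁ ^ (p - 1) - B * t₁) (h₂ : t₁ = C * s₁ ^ (p - 2) * s₁ - D * s₁)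
    (h₃ : s₂ = A * t₂ ^ (p - 1) - B * t₂) (h₄ : t₂ = C * s₂ ^ (p - 2) * s₂ - D * s₂) :
    t₁ = t₂ ∧ s₁ = s₂ := by
  have f₁ : s₁ ^ (p - 1) = s₁ ^ (p - 2) * s₁ := by
    rw [show p - 1 = (p - 2) + 1 by ring, Real.rpow_add_one hs₁.ne']
  have f₂ : s₂ ^ (p - 1) = s₂ ^ (p - 2) * s₂ := by
    rw [show p - 1 = (p - 2) + 1 by ring, Real.rpow_add_one hs₂.ne']
  have h₂' : t₁ = C * s₁ ^ (p - 1) - D * s₁ := by rw [f₁, h₂]; ring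
  have h₄' : t₂ = C * s₂ ^ (p - 1) - D * s₂ := by rw [f₂, h₄]; ring
  rcases lt_trichotomy t₁ t₂ with hlt | heq | hgt
  · exfalso
    have k1 : s₁ * t₂ < s₂ * t₁ := stmt_0_aux hA hp ht₁ ht₂ h₁ h₃ hlt
    have hs : s₁ < s₂ := by nlinarith
    have k2 : t₁ * s₂ < t₂ * s₁ := stmt_0_aux hC hp hs₁ hs₂ h₂' h₄' hs
    nlinarith
  · refine ⟨heq, ?_⟩
    rw [h₁, h₃, heq]
  · exfalso
    have k1 : s₂ * t₁ < s₁ * t₂ := stmt_0_aux hA hp ht₂ ht₁ h₃ h₁ hgt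
    have hs : s₂ < s₁ := by nlinarith
    have k2 : t₂ * s₁ < t₁ * s₂ := stmt_0_aux hC hp hs₂ hs₁ h₄' h₂' hs
    nlinarith
end

section
/- Let Ω ⊆ ℝ^N be a measurable set of finite positive measure and φ : Ω → ℝ a measurable function with 0 < ∫_Ω |φ|² dμ < ∞ and such that the family (|φ|^p)_{p ∈ [2, p̄]} is dominated by an integrable function together with |ln|φ|| · |φ|^p. Define t_p := (∫_Ω |φ|² dμ / ∫_Ω |φ|^p dμ)^{1/(p-2)} for p > 2. Then t_p converges as p → 2⁺ to exp( − (∫_Ω ln|φ| · |φ|² dμ) / (∫_Ω |φ|² dμ) ), where s ln|s| is interpreted as 0 when s = 0. -/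
open MeasureTheory Real Filter Set Topology

theorem stmt_1 {α : Type*} [MeasurableSpace α] (μ : Measure α) (Ω : Set α)
    (hΩ : MeasurableSet Ω) (hpos : 0 < μ Ω) (hfin : μ Ω < ⊤)
    (φ : α → ℝ) (hφ : Measurable φ)
    (h2 : 0 < ∫ x in Ω, |φ x| ^ (2 : ℝ) ∂μ)
    (h2fin : IntegrableOn (fun x => |φ x| ^ (2 : ℝ)) Ω μ)
    (pbar : ℝ) (hpbar : 2 < pbar)
    (g : α → ℝ) (hg : IntegrableOn g Ω μ)
    (hdom : ∀ p ∈ Set.Icc (2 : ℝ) pbar, ∀ᵐ x ∂μ.restrict Ω,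
      |φ x| ^ p ≤ g x ∧ abs (Real.log |φ x|) * |φ x| ^ p ≤ g x) :
    Filter.Tendsto (fun p : ℝ =>
        ((∫ x in Ω, |φ x| ^ (2 : ℝ) ∂μ) / (∫ x in Ω, |φ x| ^ p ∂μ)) ^ (1 / (p - 2)))
      (nhdsWithin 2 (Set.Ioi 2))
      (nhds (Real.exp (-(∫ x in Ω,
          (if φ x = 0 then 0 else Real.log |φ x| * |φ x| ^ (2 : ℝ)) ∂μ)
        / (∫ x in Ω, |φ x| ^ (2 : ℝ) ∂μ)))) := by
  set F : ℝ → ℝ := fun p => ∫ x in Ω, |φ x| ^ p ∂μ with hF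
  set L : ℝ := ∫ x in Ω, Real.log |φ x| * |φ x| ^ (2 : ℝ) ∂μ with hL
  have h2ne : (2:ℝ) ≠ 0 := by norm_num
  -- the `if` integrand equals the plain one
  have hifeq : (∫ x in Ω,
      (if φ x = 0 then 0 else Real.log |φ x| * |φ x| ^ (2 : ℝ)) ∂μ) = L := by
    refine integral_congr_ae (Eventually.of_forall fun x => ?_)
    by_cases h : φ x = 0
    · simp [h, Real.zero_rpow h2ne]
    · simp [h]
  rw [hifeq]
  have hl : 𝓝[Set.Ioi (2:ℝ)] 2 = 𝓝[Set.Ioc (2:ℝ) pbar] 2 :=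
    (nhdsWithin_Ioc_eq_nhdsGT hpbar).symm
  set l : Filter ℝ := 𝓝[Set.Ioc (2:ℝ) pbar] 2 with hldef
  rw [hl]
  have hmem : ∀ᶠ p in l, p ∈ Set.Ioc (2:ℝ) pbar := self_mem_nhdsWithin
  have hmeas : ∀ p : ℝ, 0 ≤ p → Measurable fun x => |φ x| ^ p := fun p hp =>
    (Real.continuous_rpow_const hp).measurable.comp hφ.abs
  have hint : ∀ p ∈ Set.Icc (2:ℝ) pbar, IntegrableOn (fun x => |φ x| ^ p) Ω μ := by
    intro p hp
    refine hg.mono' ((hmeas p (by linarith [hp.1])).aestronglyMeasurable) ?_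
    filter_upwards [hdom p hp] with x hx
    rw [Real.norm_eq_abs, abs_of_nonneg (Real.rpow_nonneg (abs_nonneg _) _)]
    exact hx.1
  set S : ℝ → α → ℝ := fun p x => ((|φ x| ^ p - |φ x| ^ (2:ℝ)) / (p - 2)) with hS
  -- dominated convergence for the slope
  have hA : Tendsto (fun p => ∫ x in Ω, S p x ∂μ) l (𝓝 L) := by
    refine tendsto_integral_filter_of_dominated_convergence g ?_ ?_ hg ?_
    · filter_upwards [hmem] with p hp
      exact (((hmeas p (by linarith [hp.1])).sub
        (hmeas 2 (by norm_num))).div_const _).aestronglyMeasurable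
    · filter_upwards [hmem] with p hp
      filter_upwards [hdom 2 ⟨le_refl _, le_of_lt hpbar⟩, hdom pbar ⟨le_of_lt hpbar, le_refl _⟩]
        with x h2x hpx
      have ha0 : 0 ≤ |φ x| := abs_nonneg _
      have hpne : p ≠ 0 := by have := hp.1; intro h; rw [h] at this; linarith
      rcases eq_or_lt_of_le ha0 with h0 | h0
      · have hphi : |φ x| = 0 := h0.symm
        have hgx : (0:ℝ) ≤ g x := by
          have := h2x.2
          rw [hphi, Real.zero_rpow h2ne, mul_zero] at this
          exact this
        simp only [hS, hphi, Real.zero_rpow h2ne, Real.zero_rpow hpne, sub_zero,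
          zero_div, norm_zero]
        exact hgx
      · -- mean value theorem
        have hcont : ContinuousOn (fun t : ℝ => |φ x| ^ t) (Set.Icc 2 p) :=
          (continuous_const.rpow continuous_id fun _ => Or.inl (ne_of_gt h0)).continuousOn
        have hderiv : ∀ t ∈ Set.Ioo (2:ℝ) p,
            HasDerivAt (fun t : ℝ => |φ x| ^ t) (|φ x| ^ t * Real.log |φ x|) t := fun t _ =>
          (Real.hasStrictDerivAt_const_rpow h0 t).hasDerivAt
        obtain ⟨c, hc, hceq⟩ := exists_hasDerivAt_eq_slope (fun t : ℝ => |φ x| ^ t)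
          (fun t => |φ x| ^ t * Real.log |φ x|) hp.1 hcont hderiv
        have hnorm : ‖S p x‖ = |φ x| ^ c * abs (Real.log |φ x|) := by
          simp only [hS, Real.norm_eq_abs, ← hceq, abs_mul,
            abs_of_nonneg (Real.rpow_nonneg ha0 c)]
        rw [hnorm]
        have hbound : |φ x| ^ c ≤ max (|φ x| ^ (2:ℝ)) (|φ x| ^ pbar) := by
          rcases le_or_gt (|φ x|) 1 with h1 | h1
          · exact le_max_of_le_left
              (Real.rpow_le_rpow_of_exponent_ge h0 h1 (le_of_lt hc.1))
          · exact le_max_of_le_right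
              (Real.rpow_le_rpow_of_exponent_le (le_of_lt h1)
                (le_trans (le_of_lt hc.2) hp.2))
        calc |φ x| ^ c * abs (Real.log |φ x|)
            ≤ max (|φ x| ^ (2:ℝ)) (|φ x| ^ pbar) * abs (Real.log |φ x|) :=
              mul_le_mul_of_nonneg_right hbound (abs_nonneg _)
          _ ≤ g x := by
              rcases max_cases (|φ x| ^ (2:ℝ)) (|φ x| ^ pbar) with ⟨he, _⟩ | ⟨he, _⟩ <;>
                rw [he, mul_comm]
              · exact h2x.2
              · exact hpx.2
    · refine Eventually.of_forall fun x => ?_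
      rcases eq_or_lt_of_le (abs_nonneg (φ x)) with h0 | h0
      · have hphi : |φ x| = 0 := h0.symm
        have hval : Real.log |φ x| * |φ x| ^ (2:ℝ) = 0 := by
          rw [hphi, Real.zero_rpow h2ne, mul_zero]
        rw [hval]
        refine Tendsto.congr' ?_ tendsto_const_nhds
        filter_upwards [hmem] with p hp
        have hpne : p ≠ 0 := by have := hp.1; intro h; rw [h] at this; linarith
        have hphi0 : φ x = 0 := abs_eq_zero.mp hphi
        simp [hS, hphi0, Real.zero_rpow h2ne, Real.zero_rpow hpne]
      · have hd : HasDerivAt (fun t : ℝ => |φ x| ^ t)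
            (|φ x| ^ (2:ℝ) * Real.log |φ x|) 2 :=
          (Real.hasStrictDerivAt_const_rpow h0 2).hasDerivAt
        have hts := hasDerivAt_iff_tendsto_slope.mp hd
        have hle : l ≤ 𝓝[≠] (2:ℝ) :=
          nhdsWithin_mono 2 (fun y hy => ne_of_gt hy.1)
        have h2' : Tendsto (slope (fun t : ℝ => |φ x| ^ t) 2) l
            (𝓝 (|φ x| ^ (2:ℝ) * Real.log |φ x|)) := hts.mono_left hle
        rw [mul_comm]
        refine h2'.congr fun p => ?_
        rw [slope_def_field]
  -- rewrite the slope integral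
  have hSint : ∀ᶠ p in l, (∫ x in Ω, S p x ∂μ) = (F p - F 2) / (p - 2) := by
    filter_upwards [hmem] with p hp
    simp only [hS]
    rw [integral_div, integral_sub (hint p ⟨le_of_lt hp.1, hp.2⟩) h2fin]
  have hslope : Tendsto (fun p => (F p - F 2) / (p - 2)) l (𝓝 L) := hA.congr' hSint
  have hd : HasDerivWithinAt F L (Set.Icc 2 pbar) 2 := by
    rw [hasDerivWithinAt_iff_tendsto_slope, Set.Icc_diff_left]
    exact hslope.congr fun p => (slope_def_field F 2 p).symm
  have hF2pos : 0 < F 2 := h2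
  have hlogF : HasDerivWithinAt (fun p => Real.log (F p)) ((F 2)⁻¹ * L)
      (Set.Icc 2 pbar) 2 := (Real.hasDerivAt_log (ne_of_gt hF2pos)).comp_hasDerivWithinAt 2 hd
  have hlogslope : Tendsto (fun p => (Real.log (F p) - Real.log (F 2)) / (p - 2)) l
      (𝓝 ((F 2)⁻¹ * L)) := by
    have := hasDerivWithinAt_iff_tendsto_slope.mp hlogF
    rw [Set.Icc_diff_left] at this
    exact this.congr fun p => slope_def_field _ 2 p
  have hcont : Tendsto F l (𝓝 (F 2)) :=
    (hd.continuousWithinAt).mono_left (nhdsWithin_mono 2 Set.Ioc_subset_Icc_self)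
  have hFpos : ∀ᶠ p in l, 0 < F p := hcont.eventually (eventually_gt_nhds hF2pos)
  have hfinal : Tendsto (fun p => Real.exp (-((Real.log (F p) - Real.log (F 2)) / (p - 2))))
      l (𝓝 (Real.exp (-((F 2)⁻¹ * L)))) :=
    (Real.continuous_exp.tendsto _).comp hlogslope.neg
  have hval : Real.exp (-((F 2)⁻¹ * L)) = Real.exp (-L / F 2) := by
    congr 1
    ring
  rw [hval] at hfinal
  refine hfinal.congr' ?_
  filter_upwards [hmem, hFpos] with p hp hFp
  rw [Real.rpow_def_of_pos (div_pos hF2pos hFp),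
    Real.log_div (ne_of_gt hF2pos) (ne_of_gt hFp)]
  congr 1
  ring
end

section
/- Let s ∈ (0,1), β := 1/(2(1−s)), and let y, q, p ∈ ℝ² with q ≠ y. Under the change of variables x = y + u^β (q − y) + u^β v (p − q) for (u,v) ∈ (0,1)², the Jacobian factor transforms the integral ∫_T |x − y|^{−2s} dx over the triangle T with vertices y, q, p into 2|T| ∫₀¹∫₀¹ β u^{2β(1−s)−1} (|q−y|² + v²|p−q|²)^{−s} du dv with u^{2β(1−s)−1} ≡ 1, i.e. ∫_T |x−y|^{−2s} dx = 2|T| β ∫₀¹ (|q−y|² + v²|p−q|²)^{−s} dv, where |T| is the area of T and the angle of T at q is right (⟨q − y, p − q⟩ = 0). -/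
open MeasureTheory Set

/-- The identity map between `EuclideanSpace ℝ (Fin 2)` and `Fin 2 → ℝ`
as a continuous linear equivalence. -/
noncomputable def stmt9Sigma : EuclideanSpace ℝ (Fin 2) ≃L[ℝ] (Fin 2 → ℝ) :=
  PiLp.continuousLinearEquiv 2 ℝ (fun _ : Fin 2 => ℝ)

/-- The derivative (as a matrix-induced map on `Fin 2 → ℝ`) of the map
`w ↦ (A * w 0, B * (w 0 * w 1))`. -/
noncomputable def stmt9D (A B : ℝ) (w : Fin 2 → ℝ) : (Fin 2 → ℝ) →L[ℝ] (Fin 2 → ℝ) :=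
  (Matrix.toLin' !![A, 0; B * w 1, B * w 0]).toContinuousLinearMap

/-- The map `w ↦ (A * w 0, B * (w 0 * w 1))` on `EuclideanSpace ℝ (Fin 2)`. -/
noncomputable def stmt9F (A B : ℝ) : EuclideanSpace ℝ (Fin 2) → EuclideanSpace ℝ (Fin 2) :=
  fun x => WithLp.toLp 2 ![A * x 0, B * (x 0 * x 1)]

/-- Derivative of `stmt9F` as a continuous linear endomorphism of Euclidean space. -/
noncomputable def stmt9FD (A B : ℝ) (w : EuclideanSpace ℝ (Fin 2)) :
    EuclideanSpace ℝ (Fin 2) →L[ℝ] EuclideanSpace ℝ (Fin 2) :=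
  (stmt9Sigma.symm.toContinuousLinearMap.comp (stmt9D A B (stmt9Sigma w))).comp
    stmt9Sigma.toContinuousLinearMap

theorem stmt9F_hasFDerivAt (A B : ℝ) (w : EuclideanSpace ℝ (Fin 2)) :
    HasFDerivAt (stmt9F A B) (stmt9FD A B w) w := by
  have h0 : HasFDerivAt (fun x : Fin 2 → ℝ => ![A * x 0, B * (x 0 * x 1)])
      (stmt9D A B (stmt9Sigma w)) (stmt9Sigma w) := by
    apply hasFDerivAt_pi''
    intro i
    fin_cases i
    · show HasFDerivAt (fun x : Fin 2 → ℝ => A * x 0) _ _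
      have h := ((ContinuousLinearMap.proj 0 :
        (Fin 2 → ℝ) →L[ℝ] ℝ).hasFDerivAt (x := stmt9Sigma w)).const_mul A
      refine h.congr_fderiv ?_
      ext x
      simp [stmt9D, Matrix.mulVec, dotProduct, Fin.sum_univ_two]
    · show HasFDerivAt (fun x : Fin 2 → ℝ => B * (x 0 * x 1)) _ _
      have h := (((ContinuousLinearMap.proj 0 :
          (Fin 2 → ℝ) →L[ℝ] ℝ).hasFDerivAt (x := stmt9Sigma w)).mul
        ((ContinuousLinearMap.proj 1 :
          (Fin 2 → ℝ) →L[ℝ] ℝ).hasFDerivAt (x := stmt9Sigma w))).const_mul B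
      refine h.congr_fderiv ?_
      ext x
      simp [stmt9D, Matrix.mulVec, dotProduct, Fin.sum_univ_two]
      ring
  exact (stmt9Sigma.symm.hasFDerivAt).comp w (h0.comp w stmt9Sigma.hasFDerivAt)

theorem stmt9FD_det (A B : ℝ) (w : EuclideanSpace ℝ (Fin 2)) :
    (stmt9FD A B w).det = A * (B * w 0) := by
  have hconj : (stmt9FD A B w : EuclideanSpace ℝ (Fin 2) →ₗ[ℝ] EuclideanSpace ℝ (Fin 2)) =
      (stmt9Sigma.symm.toLinearEquiv : (Fin 2 → ℝ) →ₗ[ℝ] EuclideanSpace ℝ (Fin 2)) ∘ₗ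
        ((stmt9D A B (stmt9Sigma w) : (Fin 2 → ℝ) →ₗ[ℝ] (Fin 2 → ℝ)) ∘ₗ
          (stmt9Sigma.symm.toLinearEquiv.symm :
            EuclideanSpace ℝ (Fin 2) →ₗ[ℝ] (Fin 2 → ℝ))) := rfl
  rw [ContinuousLinearMap.det, hconj, LinearMap.det_conj]
  rw [stmt9D, LinearMap.coe_toContinuousLinearMap, LinearMap.det_toLin', Matrix.det_fin_two]
  simp
  exact Or.inl (Or.inl rfl)

theorem stmt_9 (s : ℝ) (hs : s ∈ Set.Ioo (0 : ℝ) 1) (β : ℝ) (hβ : β = 1 / (2 * (1 - s)))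
    (y q p : EuclideanSpace ℝ (Fin 2)) (hqy : q ≠ y)
    (hright : (inner ℝ (q - y) (p - q) : ℝ) = 0) :
    ∫ x in {z : EuclideanSpace ℝ (Fin 2) | ∃ t ∈ Set.Ioo (0 : ℝ) 1, ∃ v ∈ Set.Ioo (0 : ℝ) 1,
        z = y + t • (q - y) + (t * v) • (p - q)}, ‖x - y‖ ^ (-(2 * s)) =
      2 * (‖q - y‖ * ‖p - q‖ / 2) * β *
        ∫ v in Set.Ioo (0 : ℝ) 1, (‖q - y‖ ^ 2 + v ^ 2 * ‖p - q‖ ^ 2) ^ (-s) := by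
  obtain ⟨hs0, hs1⟩ := hs
  have ha0 : q - y ≠ 0 := sub_ne_zero.2 hqy
  have hA : (0:ℝ) < ‖q - y‖ := norm_pos_iff.2 ha0
  by_cases hpq : p = q
  · -- degenerate triangle: everything is zero
    have hnull : volume {z : EuclideanSpace ℝ (Fin 2) | ∃ t ∈ Set.Ioo (0 : ℝ) 1,
        ∃ v ∈ Set.Ioo (0 : ℝ) 1, z = y + t • (q - y) + (t * v) • (p - q)} = 0 := by
      refine measure_mono_null (fun z hz => ?_)
        (Measure.addHaar_affineSubspace volume
          (AffineSubspace.mk' y (Submodule.span ℝ {q - y})) ?_)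
      · obtain ⟨t, ht, v, hv, rfl⟩ := hz
        rw [SetLike.mem_coe, AffineSubspace.mem_mk']
        simp only [hpq, sub_self, smul_zero, add_zero, vsub_eq_sub, add_sub_cancel_left]
        exact Submodule.smul_mem _ t (Submodule.mem_span_singleton_self _)
      · intro htop
        have hdir := AffineSubspace.direction_mk' y (Submodule.span ℝ {q - y})
        rw [htop, AffineSubspace.direction_top] at hdir
        have h1 : Module.finrank ℝ (Submodule.span ℝ {q - y}) = 1 :=
          finrank_span_singleton ha0
        rw [← hdir, finrank_top, finrank_euclideanSpace_fin] at h1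
        norm_num at h1
    rw [Measure.restrict_eq_zero.mpr hnull, integral_zero_measure]
    simp [hpq]
  · -- main case
    have hc0 : p - q ≠ 0 := sub_ne_zero.2 hpq
    have hB : (0:ℝ) < ‖p - q‖ := norm_pos_iff.2 hc0
    set a := q - y with ha_def
    set c := p - q with hc_def
    set A := ‖a‖ with hA_def
    set B := ‖c‖ with hB_def
    -- orthonormal family adapted to the right angle
    set u : Fin 2 → EuclideanSpace ℝ (Fin 2) := ![A⁻¹ • a, B⁻¹ • c] with hu_def
    have h00 : (inner ℝ (u 0) (u 0) : ℝ) = 1 := by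
      show (inner ℝ (A⁻¹ • a) (A⁻¹ • a) : ℝ) = 1
      rw [real_inner_smul_left, real_inner_smul_right, real_inner_self_eq_norm_mul_norm]
      field_simp
      rfl
    have h01 : (inner ℝ (u 0) (u 1) : ℝ) = 0 := by
      show (inner ℝ (A⁻¹ • a) (B⁻¹ • c) : ℝ) = 0
      rw [real_inner_smul_left, real_inner_smul_right, hright, mul_zero, mul_zero]
    have h10 : (inner ℝ (u 1) (u 0) : ℝ) = 0 := by
      show (inner ℝ (B⁻¹ • c) (A⁻¹ • a) : ℝ) = 0
      rw [real_inner_smul_left, real_inner_smul_right, real_inner_comm, hright,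
        mul_zero, mul_zero]
    have h11 : (inner ℝ (u 1) (u 1) : ℝ) = 1 := by
      show (inner ℝ (B⁻¹ • c) (B⁻¹ • c) : ℝ) = 1
      rw [real_inner_smul_left, real_inner_smul_right, real_inner_self_eq_norm_mul_norm]
      field_simp
      rfl
    have hu : Orthonormal ℝ u := by
      rw [orthonormal_iff_ite]
      intro i j
      fin_cases i <;> fin_cases j
      · exact h00.trans (if_pos rfl).symm
      · exact h01.trans (if_neg (by decide)).symm
      · exact h10.trans (if_neg (by decide)).symm
      · exact h11.trans (if_pos rfl).symm
    have hcard : Fintype.card (Fin 2) = Module.finrank ℝ (EuclideanSpace ℝ (Fin 2)) := by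
      simp [finrank_euclideanSpace_fin]
    set bas : Module.Basis (Fin 2) ℝ (EuclideanSpace ℝ (Fin 2)) :=
      basisOfOrthonormalOfCardEqFinrank hu hcard with hbas_def
    have hbas : ⇑bas = u := coe_basisOfOrthonormalOfCardEqFinrank hu hcard
    set ob : OrthonormalBasis (Fin 2) ℝ (EuclideanSpace ℝ (Fin 2)) :=
      bas.toOrthonormalBasis (by rwa [hbas]) with hob_def
    have hob : ⇑ob = u := by rw [hob_def, Module.Basis.coe_toOrthonormalBasis, hbas]
    have he : ∀ x : EuclideanSpace ℝ (Fin 2),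
        ob.repr.symm x = (x 0) • u 0 + (x 1) • u 1 := by
      intro x
      rw [← ob.sum_repr_symm, Fin.sum_univ_two, hob]
    -- the key parametrization identity
    have key : ∀ w : EuclideanSpace ℝ (Fin 2),
        y + ob.repr.symm (stmt9F A B w) = y + (w 0) • a + ((w 0) * (w 1)) • c := by
      intro w
      have e1 : (A * w 0) * A⁻¹ = w 0 := by field_simp
      have e2 : (B * (w 0 * w 1)) * B⁻¹ = w 0 * w 1 := by field_simp
      rw [he]
      show y + ((A * w 0) • (A⁻¹ • a) + (B * (w 0 * w 1)) • (B⁻¹ • c)) = _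
      rw [smul_smul, smul_smul, e1, e2, add_assoc]
    -- domain rectangle
    set S : Set (EuclideanSpace ℝ (Fin 2)) :=
      {w | w 0 ∈ Ioo (0:ℝ) 1 ∧ w 1 ∈ Ioo (0:ℝ) 1} with hS_def
    have hmeas_i : ∀ i : Fin 2, Measurable fun w : EuclideanSpace ℝ (Fin 2) => w i := fun i =>
      (measurable_pi_apply i).comp (MeasurableEquiv.toLp 2 (Fin 2 → ℝ)).symm.measurable
    have hSmeas : MeasurableSet S :=
      MeasurableSet.inter (hmeas_i 0 measurableSet_Ioo) (hmeas_i 1 measurableSet_Ioo)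
    -- injectivity
    have hinj : Set.InjOn (stmt9F A B) S := by
      rintro w ⟨hw0, hw1⟩ w' ⟨hw0', hw1'⟩ hww
      have e0 : A * w 0 = A * w' 0 :=
        congr_arg (fun z : EuclideanSpace ℝ (Fin 2) => z 0) hww
      have e1 : B * (w 0 * w 1) = B * (w' 0 * w' 1) :=
        congr_arg (fun z : EuclideanSpace ℝ (Fin 2) => z 1) hww
      have hw00 : w 0 = w' 0 := mul_left_cancel₀ (ne_of_gt hA) e0
      have hw11 : w 1 = w' 1 := by
        have h2 := mul_left_cancel₀ (ne_of_gt hB) e1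
        rw [hw00] at h2
        exact mul_left_cancel₀ (ne_of_gt hw0'.1) h2
      ext i
      fin_cases i
      · exact hw00
      · exact hw11
    -- the triangle as an image
    have hset : {z : EuclideanSpace ℝ (Fin 2) | ∃ t ∈ Ioo (0:ℝ) 1, ∃ v ∈ Ioo (0:ℝ) 1,
        z = y + t • a + (t * v) • c} =
        (fun z => y + ob.repr.symm z) '' (stmt9F A B '' S) := by
      ext z
      simp only [Set.mem_setOf_eq, Set.mem_image]
      constructor
      · rintro ⟨t, ht, v, hv, rfl⟩
        refine ⟨stmt9F A B !₂[t, v], ⟨!₂[t, v], ⟨?_, ?_⟩, rfl⟩, ?_⟩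
        · exact ht
        · exact hv
        · rw [key]
          rfl
      · rintro ⟨-, ⟨w, ⟨hw0, hw1⟩, rfl⟩, rfl⟩
        exact ⟨w 0, hw0, w 1, hw1, key w⟩
    -- translation + rotation is measure preserving
    have hmp : MeasurePreserving (fun z : EuclideanSpace ℝ (Fin 2) => y + ob.repr.symm z)
        volume volume :=
      (measurePreserving_add_left volume y).comp ob.measurePreserving_repr_symm
    have hemb : MeasurableEmbedding (fun z : EuclideanSpace ℝ (Fin 2) => y + ob.repr.symm z) :=
      ((Homeomorph.addLeft y).measurableEmbedding).comp
        (ob.repr.symm.toHomeomorph.measurableEmbedding)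
    rw [hset, hmp.setIntegral_image_emb hemb]
    simp only [add_sub_cancel_left, LinearIsometryEquiv.norm_map]
    rw [integral_image_eq_integral_abs_det_fderiv_smul volume hSmeas
      (fun w _ => (stmt9F_hasFDerivAt A B w).hasFDerivWithinAt) hinj
      (fun x => ‖x‖ ^ (-(2 * s)))]
    -- pointwise simplification of the integrand
    have hpt : Set.EqOn (fun w => |(stmt9FD A B w).det| • ‖stmt9F A B w‖ ^ (-(2*s)))
        (fun w : EuclideanSpace ℝ (Fin 2) =>
          (A * B * (w 0 * ((w 0)^2) ^ (-s))) * ((A^2 + (w 1)^2 * B^2) ^ (-s))) S := by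
      rintro w ⟨hw0, hw1⟩
      have hX : (0:ℝ) ≤ (w 0)^2 * (A^2 + (w 1)^2 * B^2) := by positivity
      have hY : (0:ℝ) ≤ A^2 + (w 1)^2 * B^2 := by positivity
      have hnorm : ‖stmt9F A B w‖ = Real.sqrt ((w 0)^2 * (A^2 + (w 1)^2 * B^2)) := by
        rw [EuclideanSpace.norm_eq]
        congr 1
        rw [Fin.sum_univ_two]
        show ‖A * w 0‖^2 + ‖B * (w 0 * w 1)‖^2 = _
        rw [Real.norm_eq_abs, Real.norm_eq_abs, sq_abs, sq_abs]
        ring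
      simp only
      rw [stmt9FD_det, smul_eq_mul, hnorm, Real.sqrt_eq_rpow, ← Real.rpow_mul hX]
      have hexp : 1/2 * (-(2*s)) = -s := by ring
      rw [hexp, Real.mul_rpow (sq_nonneg _) hY,
        abs_of_pos (mul_pos hA (mul_pos hB hw0.1))]
      ring
    rw [setIntegral_congr_fun hSmeas hpt]
    -- transfer the integral over the rectangle to ℝ × ℝ
    have hφ : MeasurePreserving (fun z : ℝ × ℝ =>
        ((MeasurableEquiv.toLp 2 (Fin 2 → ℝ))
          (MeasurableEquiv.finTwoArrow.symm z) : EuclideanSpace ℝ (Fin 2)))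
        volume volume :=
      ((EuclideanSpace.volume_preserving_symm_measurableEquiv_toLp (Fin 2)).symm).comp
        ((volume_preserving_finTwoArrow ℝ).symm)
    have hφemb : MeasurableEmbedding (fun z : ℝ × ℝ =>
        ((MeasurableEquiv.toLp 2 (Fin 2 → ℝ))
          (MeasurableEquiv.finTwoArrow.symm z) : EuclideanSpace ℝ (Fin 2))) :=
      ((MeasurableEquiv.toLp 2 (Fin 2 → ℝ)).measurableEmbedding).comp
        (MeasurableEquiv.finTwoArrow.symm.measurableEmbedding)
    have heval0 : ∀ z : ℝ × ℝ, ((MeasurableEquiv.toLp 2 (Fin 2 → ℝ))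
        (MeasurableEquiv.finTwoArrow.symm z) : EuclideanSpace ℝ (Fin 2)) 0 = z.1 := by
      intro z
      simp [MeasurableEquiv.finTwoArrow]
    have heval1 : ∀ z : ℝ × ℝ, ((MeasurableEquiv.toLp 2 (Fin 2 → ℝ))
        (MeasurableEquiv.finTwoArrow.symm z) : EuclideanSpace ℝ (Fin 2)) 1 = z.2 := by
      intro z
      simp [MeasurableEquiv.finTwoArrow]
    have hpre : (fun z : ℝ × ℝ =>
        ((MeasurableEquiv.toLp 2 (Fin 2 → ℝ))
          (MeasurableEquiv.finTwoArrow.symm z) : EuclideanSpace ℝ (Fin 2))) ⁻¹' S =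
        Ioo (0:ℝ) 1 ×ˢ Ioo (0:ℝ) 1 := by
      ext z
      simp only [Set.mem_preimage, hS_def, Set.mem_setOf_eq, heval0, heval1,
        Set.mem_prod, Set.mem_Ioo]
    rw [← hφ.setIntegral_preimage_emb hφemb, hpre]
    simp only [heval0, heval1]
    rw [Measure.volume_eq_prod]
    rw [setIntegral_prod_mul (f := fun t : ℝ => A * B * (t * (t^2) ^ (-s)))
      (g := fun v : ℝ => (A^2 + v^2 * B^2) ^ (-s))]
    -- evaluate the 1D integral in t
    have ht1 : ∫ t in Ioo (0:ℝ) 1, A * B * (t * (t^2) ^ (-s)) =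
        A * B * (1 / (2 - 2*s)) := by
      rw [integral_const_mul]
      congr 1
      have hcg : Set.EqOn (fun t : ℝ => t * (t^2) ^ (-s))
          (fun t : ℝ => t ^ (1 - 2*s)) (Ioo (0:ℝ) 1) := by
        intro t ht
        have ht0 : (0:ℝ) < t := ht.1
        simp only
        rw [← Real.rpow_natCast t 2, ← Real.rpow_mul ht0.le]
        nth_rewrite 1 [← Real.rpow_one t]
        rw [← Real.rpow_add ht0]
        congr 1
        push_cast
        ring
      rw [setIntegral_congr_fun measurableSet_Ioo hcg,
        ← integral_Ioc_eq_integral_Ioo,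
        ← intervalIntegral.integral_of_le (by norm_num : (0:ℝ) ≤ 1),
        integral_rpow (Or.inl (by linarith : (-1:ℝ) < 1 - 2*s)),
        Real.one_rpow, Real.zero_rpow (by linarith)]
      ring
    rw [ht1, hβ]
    ring
end

section
/- Let H be a real Hilbert space and φ₁ ∈ H with ‖φ₁‖ = 1, and let T : H → H be a compact self-adjoint positive operator with T φ₁ = λ₁^{-1} φ₁ where λ₁⁻¹ is a simple eigenvalue of T. Then the linear map L : H × ℝ → H × ℝ, L(v,t) = (v − λ₁ T v − t T φ₁, 2⟨φ₁, v⟩), is bijective. -/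
open Filter Topology NNReal

-- compact operator: bounded sequence has subsequence with convergent image
lemma seq_cpt {H : Type*} [NormedAddCommGroup H] [InnerProductSpace ℝ H]
    (T : H →L[ℝ] H) (hcomp : IsCompactOperator T) (v : ℕ → H) (hv : ∀ n, ‖v n‖ ≤ 1) :
    ∃ y : H, ∃ ψ : ℕ → ℕ, StrictMono ψ ∧ Tendsto (fun n => T (v (ψ n))) atTop (𝓝 y) := by
  have hK : IsCompact (closure ((T : H →ₗ[ℝ] H) '' Metric.closedBall 0 1)) :=
    IsCompactOperator.isCompact_closure_image_closedBall (𝕜₁ := ℝ) hcomp 1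
  have hmem : ∀ n, T (v n) ∈ closure ((T : H →ₗ[ℝ] H) '' Metric.closedBall 0 1) := fun n =>
    subset_closure ⟨v n, by simpa [Metric.mem_closedBall, dist_eq_norm] using hv n, rfl⟩
  obtain ⟨y, -, ψ, hψ, hten⟩ := hK.tendsto_subseq hmem
  exact ⟨y, ψ, hψ, hten⟩

-- symmetric, bounded-below operator is surjective
lemma surj_of_bb {H : Type*} [NormedAddCommGroup H] [InnerProductSpace ℝ H] [CompleteSpace H]
    (B : H →L[ℝ] H) (hsym : ∀ v w : H, (inner ℝ (B v) w : ℝ) = inner ℝ v (B w))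
    (c : ℝ≥0) (hbb : ∀ v : H, ‖v‖ ≤ c⁻¹ * ‖B v‖) :
    Function.Surjective B := by
  have hanti : AntilipschitzWith c⁻¹ B := B.antilipschitz_of_bound hbb
  have hclosed : IsClosed (Set.range B) := hanti.isClosed_range B.uniformContinuous
  set K : Submodule ℝ H := LinearMap.range (B : H →ₗ[ℝ] H) with hK
  have hKc : K.topologicalClosure = K := by
    apply le_antisymm _ K.le_topologicalClosure
    intro x hx
    exact hclosed.closure_subset (by rw [← SetLike.mem_coe, Submodule.topologicalClosure_coe, LinearMap.coe_range] at hx; simpa using hx)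
  have hKo : Kᗮ = ⊥ := by
    rw [Submodule.eq_bot_iff]
    intro w hw
    have hBw : B w = 0 := by
      have h1 : (inner ℝ (B (B w)) w : ℝ) = 0 := hw (B (B w)) ⟨B w, rfl⟩
      have h2 : (inner ℝ (B w) (B w) : ℝ) = 0 := by rw [← hsym]; exact h1
      exact inner_self_eq_zero.mp h2
    have := hbb w
    rw [hBw] at this
    simpa using le_antisymm (by simpa using this) (norm_nonneg w)
  have : K = ⊤ := by
    have := Submodule.orthogonal_orthogonal_eq_closure K
    rw [hKo, Submodule.bot_orthogonal_eq_top, hKc] at this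
    exact this.symm
  intro w
  have : w ∈ K := this ▸ Submodule.mem_top
  exact this

lemma bb_of_inj {H : Type*} [NormedAddCommGroup H] [InnerProductSpace ℝ H]
    (T : H →L[ℝ] H) (hcomp : IsCompactOperator T) (φ₁ : H) (lam1 : ℝ)
    (B : H →L[ℝ] H)
    (hBdef : ∀ v : H, v = B v + lam1 • T v - (inner ℝ φ₁ v : ℝ) • φ₁)
    (hinj : ∀ v : H, B v = 0 → v = 0) :
    ∃ c : ℝ, 0 < c ∧ ∀ v : H, c * ‖v‖ ≤ ‖B v‖ := by
  by_contra hcon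
  push_neg at hcon
  have hex : ∀ n : ℕ, ∃ u : H, ‖u‖ = 1 ∧ ‖B u‖ < 1 / (n + 1) := by
    intro n
    obtain ⟨v, hv⟩ := hcon (1 / (n + 1)) (by positivity)
    have hvne : v ≠ 0 := by
      rintro rfl; simp at hv
    have hnv : (0:ℝ) < ‖v‖ := norm_pos_iff.mpr hvne
    refine ⟨‖v‖⁻¹ • v, ?_, ?_⟩
    · simp [norm_smul, abs_of_nonneg, inv_mul_cancel₀ hnv.ne']
    · rw [map_smul, norm_smul]
      simp only [norm_inv, norm_norm, Real.norm_eq_abs, abs_of_pos hnv]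
      calc ‖v‖⁻¹ * ‖B v‖ < ‖v‖⁻¹ * (1 / (n + 1) * ‖v‖) := by
            apply mul_lt_mul_of_pos_left hv (by positivity)
        _ = 1 / (n + 1) := by field_simp
  choose u hu1 hu2 using hex
  have hBu0 : Tendsto (fun n => B (u n)) atTop (𝓝 0) := by
    rw [tendsto_zero_iff_norm_tendsto_zero]
    apply squeeze_zero (fun n => norm_nonneg _) (fun n => (hu2 n).le)
    exact tendsto_one_div_add_atTop_nhds_zero_nat
  obtain ⟨y, ψ, hψ, hTy⟩ := seq_cpt T hcomp u (fun n => (hu1 n).le)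
  have hbdd : ∀ n : ℕ, (inner ℝ φ₁ (u (ψ n)) : ℝ) ∈ Set.Icc (-‖φ₁‖) ‖φ₁‖ := by
    intro n
    have := abs_real_inner_le_norm φ₁ (u (ψ n))
    rw [hu1, mul_one] at this
    exact abs_le.mp this
  obtain ⟨r, -, ρ, hρ, hr⟩ := tendsto_subseq_of_bounded (Metric.isBounded_Icc _ _) hbdd
  set w : H := lam1 • y - r • φ₁ with hw
  have huten : Tendsto (fun n => u (ψ (ρ n))) atTop (𝓝 w) := by
    have h1 : Tendsto (fun n => B (u (ψ (ρ n)))) atTop (𝓝 0) :=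
      hBu0.comp ((hψ.comp hρ).tendsto_atTop)
    have h2 : Tendsto (fun n => lam1 • T (u (ψ (ρ n)))) atTop (𝓝 (lam1 • y)) :=
      (hTy.comp hρ.tendsto_atTop).const_smul lam1
    have h3 : Tendsto (fun n => (inner ℝ φ₁ (u (ψ (ρ n))) : ℝ) • φ₁) atTop (𝓝 (r • φ₁)) :=
      hr.smul_const φ₁
    have := (h1.add h2).sub h3
    rw [zero_add] at this
    refine this.congr fun n => (hBdef (u (ψ (ρ n)))).symm
  have hwn : ‖w‖ = 1 := by
    have := (continuous_norm.tendsto w).comp huten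
    have h2 : Tendsto (fun n => ‖u (ψ (ρ n))‖) atTop (𝓝 1) := by
      simp only [hu1]; exact tendsto_const_nhds (x := (1:ℝ)) (f := atTop (α := ℕ))
    exact tendsto_nhds_unique this h2
  have hBw : B w = 0 := by
    have h1 : Tendsto (fun n => B (u (ψ (ρ n)))) atTop (𝓝 (B w)) :=
      (B.continuous.tendsto w).comp huten
    have h2 : Tendsto (fun n => B (u (ψ (ρ n)))) atTop (𝓝 0) :=
      hBu0.comp ((hψ.comp hρ).tendsto_atTop)
    exact tendsto_nhds_unique h1 h2
  have := hinj w hBw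
  rw [this] at hwn
  simp at hwn

theorem stmt_13 {H : Type*} [NormedAddCommGroup H] [InnerProductSpace ℝ H] [CompleteSpace H]
    (T : H →L[ℝ] H) (hT : IsSelfAdjoint T) (hcomp : IsCompactOperator T)
    (hpos : ∀ v : H, 0 ≤ (inner ℝ (T v) v : ℝ))
    (φ₁ : H) (hφ : ‖φ₁‖ = 1) (lam1 : ℝ) (hlam : 0 < lam1)
    (heig : T φ₁ = lam1⁻¹ • φ₁)
    (hsimple : ∀ v : H, v - lam1 • T v = 0 → ∃ a : ℝ, v = a • φ₁) :
    Function.Bijective (fun vt : H × ℝ =>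
      (vt.1 - lam1 • T vt.1 - vt.2 • T φ₁, 2 * (inner ℝ φ₁ vt.1 : ℝ))) := by
  have hφφ : (inner ℝ φ₁ φ₁ : ℝ) = 1 := by
    rw [real_inner_self_eq_norm_mul_norm, hφ, mul_one]
  have hsymT : ∀ v w : H, (inner ℝ (T v) w : ℝ) = inner ℝ v (T w) := fun v w => hT.isSymmetric v w
  have hφT : ∀ v : H, (inner ℝ φ₁ (T v) : ℝ) = lam1⁻¹ * inner ℝ φ₁ v := by
    intro v
    rw [real_inner_comm, hsymT, heig, real_inner_smul_right, real_inner_comm]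
  set B : H →L[ℝ] H :=
    ContinuousLinearMap.id ℝ H - lam1 • T + (innerSL ℝ φ₁).smulRight φ₁ with hB
  have hBapp : ∀ v : H, B v = v - lam1 • T v + (inner ℝ φ₁ v : ℝ) • φ₁ := by
    intro v; simp [hB]
  -- inner ℝ of φ₁ with (v - lam1 • T v) is zero
  have hAperp : ∀ v : H, (inner ℝ φ₁ (v - lam1 • T v) : ℝ) = 0 := by
    intro v
    rw [inner_sub_right, real_inner_smul_right, hφT, ← mul_assoc,
      mul_inv_cancel₀ hlam.ne', one_mul, sub_self]
  have hinjB : ∀ v : H, B v = 0 → v = 0 := by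
    intro v hv
    rw [hBapp] at hv
    have hc : (inner ℝ φ₁ v : ℝ) = 0 := by
      have h1 : (inner ℝ φ₁ (v - lam1 • T v + (inner ℝ φ₁ v : ℝ) • φ₁) : ℝ) = 0 := by
        rw [hv, inner_zero_right]
      rw [inner_add_right, hAperp, real_inner_smul_right, hφφ, mul_one, zero_add] at h1
      exact h1
    rw [hc, zero_smul, add_zero] at hv
    obtain ⟨a, ha⟩ := hsimple v hv
    have : a = 0 := by
      rw [ha, real_inner_smul_right, hφφ, mul_one] at hc; exact hc
    rw [ha, this, zero_smul]
  have hsymB : ∀ v w : H, (inner ℝ (B v) w : ℝ) = inner ℝ v (B w) := by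
    intro v w
    rw [hBapp, hBapp, inner_add_left, inner_add_right, inner_sub_left, inner_sub_right,
      real_inner_smul_left, real_inner_smul_right, hsymT, real_inner_smul_left,
      real_inner_smul_right]
    rw [real_inner_comm φ₁ v]
    ring
  obtain ⟨c, hc, hbb⟩ := bb_of_inj T hcomp φ₁ lam1 B
    (fun v => by rw [hBapp]; abel) hinjB
  have hsurjB : Function.Surjective B := by
    apply surj_of_bb B hsymB ⟨c, hc.le⟩
    intro v
    have := hbb v
    show ‖v‖ ≤ c⁻¹ * ‖B v‖
    rw [← le_div_iff₀' hc] at this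
    simpa [div_eq_inv_mul] using this
  constructor
  · rintro ⟨v, t⟩ ⟨v', t'⟩ heq
    simp only [Prod.mk.injEq] at heq
    obtain ⟨heq1, heq2⟩ := heq
    set u := v - v' with hu
    set τ := t - t' with hτ
    have hcu : (inner ℝ φ₁ u : ℝ) = 0 := by
      rw [hu, inner_sub_right]
      have : (inner ℝ φ₁ v : ℝ) = inner ℝ φ₁ v' := by linarith
      rw [this, sub_self]
    have h0 : u - lam1 • T u - τ • T φ₁ = 0 := by
      calc u - lam1 • T u - τ • T φ₁
          = (v - lam1 • T v - t • T φ₁) - (v' - lam1 • T v' - t' • T φ₁) := by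
            rw [hu, hτ, map_sub, smul_sub, sub_smul]; abel
        _ = 0 := by rw [heq1, sub_self]
    have hA : u - lam1 • T u = (τ * lam1⁻¹) • φ₁ := by
      rw [sub_eq_zero] at h0
      rw [h0, heig, smul_smul]
    have hτ0 : τ = 0 := by
      have h1 : (inner ℝ φ₁ ((τ * lam1⁻¹) • φ₁) : ℝ) = 0 := by rw [← hA]; exact hAperp u
      rw [real_inner_smul_right, hφφ, mul_one] at h1
      have : lam1⁻¹ ≠ 0 := inv_ne_zero hlam.ne'
      exact (mul_eq_zero.mp h1).resolve_right this
    rw [hτ0, zero_mul, zero_smul] at hA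
    obtain ⟨a, ha⟩ := hsimple u hA
    have ha0 : a = 0 := by
      rw [ha, real_inner_smul_right, hφφ, mul_one] at hcu; exact hcu
    have hu0 : u = 0 := by rw [ha, ha0, zero_smul]
    have hv : v = v' := by rwa [hu, sub_eq_zero] at hu0
    have ht : t = t' := by
      have := hτ0; rw [hτ, sub_eq_zero] at this; exact this
    exact Prod.ext hv ht
  · rintro ⟨w, s⟩
    set c : ℝ := inner ℝ φ₁ w with hcdef
    obtain ⟨v, hv⟩ := hsurjB (w + (s / 2 - c) • φ₁)
    rw [hBapp] at hv
    have hfv : (inner ℝ φ₁ v : ℝ) = s / 2 := by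
      have h1 : (inner ℝ φ₁ (v - lam1 • T v + (inner ℝ φ₁ v : ℝ) • φ₁) : ℝ)
          = inner ℝ φ₁ (w + (s / 2 - c) • φ₁) := by rw [hv]
      rw [inner_add_right, hAperp, real_inner_smul_right, hφφ, mul_one, zero_add,
        inner_add_right, real_inner_smul_right, hφφ, mul_one, ← hcdef] at h1
      linarith
    refine ⟨⟨v, -lam1 * c⟩, ?_⟩
    simp only [Prod.mk.injEq]
    constructor
    · have hAv : v - lam1 • T v = w + (s / 2 - c) • φ₁ - (s / 2) • φ₁ := by
        rw [← hv, hfv]; abel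
      rw [hAv, heig, smul_smul]
      have : -lam1 * c * lam1⁻¹ = -c := by field_simp
      rw [this]
      rw [sub_smul, neg_smul]
      abel
    · rw [hfv]; ring
end
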